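/- Let μ ≥ 0, ν > 0 and s > 0 be real numbers, and define β(s) := (1 + s − s·√((ν + 4μs − 2νs + νs²)/(ν s²)))/(2s). Then β(s) ≤ 1 and s·β(s) ≤ 1; consequently the convergence rate ρ = max(β(s), s·β(s)) of the accelerated sketch-and-project method with these parameters satisfies ρ ≤ 1. -/

import Mathlib

/-- For μ ≥ 0, ν > 0, s > 0 and
β(s) := (1 + s − s·√((ν + 4μs − 2νs + νs²)/(νs²)))/(2s), one has β(s) ≤ 1 and
s·β(s) ≤ 1; consequently the rate ρ = max(β(s), s·β(s)) satisfies ρ ≤ 1. -/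
theorem beta_star_rate_le_one (μ ν s : ℝ) (hμ : 0 ≤ μ) (hν : 0 < ν) (hs : 0 < s)
    (β : ℝ)
    (hβ : β = (1 + s - s * Real.sqrt ((ν + 4 * μ * s - 2 * ν * s + ν * s ^ 2) / (ν * s ^ 2)))
              / (2 * s)) :
    β ≤ 1 ∧ s * β ≤ 1 ∧ max β (s * β) ≤ 1 := by
  set A := (ν + 4 * μ * s - 2 * ν * s + ν * s ^ 2) / (ν * s ^ 2) with hA
  have hkey : |1 - s| ≤ s * Real.sqrt A := by
    have h1 : s * Real.sqrt A = Real.sqrt (s ^ 2 * A) := by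
      rw [Real.sqrt_mul (sq_nonneg s), Real.sqrt_sq hs.le]
    have h2 : s ^ 2 * A = (1 - s) ^ 2 + 4 * μ * s / ν := by
      rw [hA]; field_simp; ring
    rw [h1, h2]
    calc |1 - s| = Real.sqrt ((1 - s) ^ 2) := (Real.sqrt_sq_eq_abs _).symm
      _ ≤ _ := Real.sqrt_le_sqrt (le_add_of_nonneg_right (by positivity))
  have h3 : 1 - s ≤ s * Real.sqrt A := le_trans (le_abs_self _) hkey
  have h4 : s - 1 ≤ s * Real.sqrt A := le_trans (by simpa using neg_le_abs (1 - s)) hkey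
  have hb1 : β ≤ 1 := by
    rw [hβ, div_le_one (by linarith)]; linarith
  have hb2 : s * β ≤ 1 := by
    rw [hβ]
    have : s * ((1 + s - s * Real.sqrt A) / (2 * s)) = (1 + s - s * Real.sqrt A) / 2 := by
      field_simp
    rw [this, div_le_one (by norm_num)]; linarith
  exact ⟨hb1, hb2, max_le hb1 hb2⟩
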